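/- Let ρ ∈ (0,1), let r, K be positive integers, and let a_1, …, a_r be positive integers with a_1 + ⋯ + a_r = K. Then Σ_{i=1}^{r} ⌈ ln( 2·Σ_{j=i}^{r} a_j·2^{i−j} ) / ln(1/ρ²) ⌉ < K · ln(4/ρ²)/ln(1/ρ²). -/

import Mathlib

open Finset

/-- the counting argument of Theorem 1.  If the support of size `K` is
split into `r` blocks of positive sizes `a 1, …, a r` (here indexed by `Fin r`), then
the total number of iterations `Σᵢ ⌈ln(2 Σ_{j≥i} a_j 2^{i−j}) / ln(1/ρ²)⌉` is less than
`K · ln(4/ρ²)/ln(1/ρ²)`. -/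
theorem cosamp_iteration_count
    (ρ : ℝ) (hρ0 : 0 < ρ) (hρ1 : ρ < 1)
    (r K : ℕ) (hr : 0 < r) (hK : 0 < K)
    (a : Fin r → ℕ) (ha : ∀ i, 0 < a i) (hsum : ∑ i, a i = K) :
    ((∑ i : Fin r,
        ⌈Real.log (2 * ∑ j ∈ Finset.Ici i, (a j : ℝ) / 2 ^ ((j : ℕ) - (i : ℕ))) /
          Real.log (1 / ρ ^ 2)⌉ : ℤ) : ℝ) <
      (K : ℝ) * (Real.log (4 / ρ ^ 2) / Real.log (1 / ρ ^ 2)) := by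
  have hρ2 : (0:ℝ) < ρ ^ 2 := by positivity
  have hρ2lt : ρ ^ 2 < 1 := by nlinarith
  have h1ρ : (1:ℝ) < 1 / ρ ^ 2 := (one_lt_div hρ2).mpr hρ2lt
  set L := Real.log (1 / ρ ^ 2) with hLdef
  have hL : 0 < L := Real.log_pos h1ρ
  set S : Fin r → ℝ := fun i => ∑ j ∈ Finset.Ici i, (a j : ℝ) / 2 ^ ((j : ℕ) - (i : ℕ))
    with hSdef
  -- each S i ≥ 1
  have hS1 : ∀ i, 1 ≤ S i := by
    intro i
    have hi : i ∈ Finset.Ici i := Finset.mem_Ici.mpr le_rfl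
    have h := Finset.single_le_sum (f := fun j => (a j : ℝ) / 2 ^ ((j : ℕ) - (i : ℕ)))
      (fun j _ => by positivity) hi
    have hai : (1:ℝ) ≤ (a i : ℝ) := by exact_mod_cast ha i
    simp only [Nat.sub_self, pow_zero, div_one] at h
    exact le_trans hai h
  have hSpos : ∀ i, 0 < S i := fun i => lt_of_lt_of_le one_pos (hS1 i)
  -- r ≤ K
  have hrK : r ≤ K := by
    calc r = ∑ _i : Fin r, 1 := by simp
    _ ≤ ∑ i, a i := Finset.sum_le_sum fun i _ => ha i
    _ = K := hsum
  -- T := ∑ S i ≤ 2K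
  set T := ∑ i, S i with hTdef
  have hTr : (r : ℝ) ≤ T := by
    calc (r:ℝ) = ∑ _i : Fin r, (1:ℝ) := by simp
    _ ≤ ∑ i, S i := Finset.sum_le_sum fun i _ => hS1 i
  have hTpos : 0 < T := lt_of_lt_of_le (by exact_mod_cast hr) hTr
  have hT2K : T ≤ 2 * K := by
    have hswap : T = ∑ j, ∑ i ∈ Finset.Iic j, (a j : ℝ) / 2 ^ ((j : ℕ) - (i : ℕ)) := by
      rw [hTdef, hSdef]
      exact Finset.sum_comm' (fun x y => by simp [and_comm])
    rw [hswap, ← hsum]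
    push_cast
    rw [Finset.mul_sum]
    refine Finset.sum_le_sum fun j _ => ?_
    have hinner : ∑ i ∈ Finset.Iic j, (a j : ℝ) / 2 ^ ((j : ℕ) - (i : ℕ))
        = (a j : ℝ) * ∑ i ∈ Finset.Iic j, (1/2 : ℝ) ^ ((j : ℕ) - (i : ℕ)) := by
      rw [Finset.mul_sum]
      refine Finset.sum_congr rfl fun i _ => ?_
      rw [div_pow, one_pow, div_eq_mul_inv, div_eq_mul_inv, one_mul]
    rw [hinner]
    have hgeo : ∑ i ∈ Finset.Iic j, (1/2 : ℝ) ^ ((j : ℕ) - (i : ℕ)) ≤ 2 := by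
      have himg : ∑ i ∈ Finset.Iic j, (1/2 : ℝ) ^ ((j : ℕ) - (i : ℕ))
          = ∑ k ∈ (Finset.Iic j).image (fun i : Fin r => (j : ℕ) - (i : ℕ)),
              (1/2 : ℝ) ^ k := by
        rw [Finset.sum_image]
        intro x hx y hy hxy
        have hxj : (x : ℕ) ≤ (j : ℕ) := Fin.le_def.mp (Finset.mem_Iic.mp hx)
        have hyj : (y : ℕ) ≤ (j : ℕ) := Fin.le_def.mp (Finset.mem_Iic.mp hy)
        have : (x : ℕ) = (y : ℕ) := by simp only at hxy; omega
        exact Fin.ext this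
      rw [himg]
      refine le_trans (Finset.sum_le_sum_of_subset_of_nonneg ?_ (fun k _ _ => by positivity))
        (sum_geometric_two_le r)
      intro k hk
      simp only [Finset.mem_image] at hk
      obtain ⟨i, _, rfl⟩ := hk
      exact Finset.mem_range.mpr (lt_of_le_of_lt (Nat.sub_le _ _) j.isLt)
    have haj : (0:ℝ) ≤ (a j : ℝ) := by positivity
    calc (a j : ℝ) * ∑ i ∈ Finset.Iic j, (1/2 : ℝ) ^ ((j : ℕ) - (i : ℕ))
        ≤ (a j : ℝ) * 2 := by nlinarith
    _ = 2 * (a j : ℝ) := by ring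
  -- key log bound: ∑ log (2 S i) ≤ K log 4
  have hlogsum : ∑ i, Real.log (2 * S i) ≤ (K : ℝ) * Real.log 4 := by
    set c : ℝ := 2 * T / r with hcdef
    have hrpos : (0:ℝ) < r := by exact_mod_cast hr
    have hcpos : 0 < c := by positivity
    have step1 : ∀ i : Fin r, Real.log (2 * S i) ≤ 2 * S i / c - 1 + Real.log c := by
      intro i
      have hx : 0 < 2 * S i / c := div_pos (mul_pos two_pos (hSpos i)) hcpos
      have := Real.log_le_sub_one_of_pos hx
      rw [Real.log_div (ne_of_gt (mul_pos two_pos (hSpos i))) (ne_of_gt hcpos)] at this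
      linarith
    have step2 : ∑ i, Real.log (2 * S i) ≤ (r : ℝ) * Real.log c := by
      calc ∑ i, Real.log (2 * S i) ≤ ∑ i : Fin r, (2 * S i / c - 1 + Real.log c) :=
            Finset.sum_le_sum fun i _ => step1 i
      _ = 2 * T / c - r + r * Real.log c := by
            rw [Finset.sum_add_distrib, Finset.sum_sub_distrib]
            simp [Finset.mul_sum, Finset.sum_div, hTdef, mul_comm]
      _ = (r : ℝ) * Real.log c := by
            have : 2 * T / c = r := by
              rw [hcdef]; field_simp
            rw [this]; ring
    have hcle : c ≤ 4 * K / r := by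
      rw [hcdef]
      have : 2 * T ≤ 4 * K := by linarith
      exact (div_le_div_iff_of_pos_right hrpos).mpr this
    have step3 : (r : ℝ) * Real.log c ≤ (r : ℝ) * Real.log (4 * K / r) := by
      have := Real.log_le_log hcpos hcle
      nlinarith
    -- r log (4K/r) ≤ K log 4
    have hKr : (r : ℝ) ≤ K := by exact_mod_cast hrK
    have hKpos : (0:ℝ) < K := by exact_mod_cast hK
    have hlog4 : (1:ℝ) ≤ Real.log 4 := by
      rw [show (1:ℝ) = Real.log (Real.exp 1) by simp]
      exact Real.log_le_log (Real.exp_pos 1) (le_of_lt (lt_trans Real.exp_one_lt_d9 (by norm_num)))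
    have step4 : (r : ℝ) * Real.log (4 * K / r) ≤ (K : ℝ) * Real.log 4 := by
      have hsplit : Real.log (4 * K / r) = Real.log 4 + Real.log ((K:ℝ)/r) := by
        rw [show (4 * (K:ℝ) / r) = 4 * ((K:ℝ)/r) by ring]
        rw [Real.log_mul (by norm_num) (by positivity)]
      have hlt : Real.log ((K:ℝ)/r) ≤ (K:ℝ)/r - 1 :=
        Real.log_le_sub_one_of_pos (by positivity)
      have h1 : (r:ℝ) * Real.log ((K:ℝ)/r) ≤ K - r := by
        have := mul_le_mul_of_nonneg_left hlt (le_of_lt hrpos)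
        calc (r:ℝ) * Real.log ((K:ℝ)/r) ≤ r * ((K:ℝ)/r - 1) := this
        _ = K - r := by field_simp
      have h2 : (K:ℝ) - r ≤ ((K:ℝ) - r) * Real.log 4 := by nlinarith
      rw [hsplit]
      nlinarith
    linarith [le_trans step2 (le_trans step3 step4)]
  -- put it together
  have hceil : ∀ i : Fin r,
      ((⌈Real.log (2 * S i) / L⌉ : ℤ) : ℝ) < Real.log (2 * S i) / L + 1 :=
    fun i => Int.ceil_lt_add_one _
  have hmain : ((∑ i : Fin r, ⌈Real.log (2 * S i) / L⌉ : ℤ) : ℝ)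
      < ∑ i : Fin r, (Real.log (2 * S i) / L + 1) := by
    push_cast
    exact Finset.sum_lt_sum_of_nonempty (Finset.univ_nonempty_iff.mpr (by exact ⟨⟨0, hr⟩⟩))
      fun i _ => hceil i
  have hrhs : ∑ i : Fin r, (Real.log (2 * S i) / L + 1)
      ≤ (K : ℝ) * (Real.log (4 / ρ ^ 2) / L) := by
    have hexp : Real.log (4 / ρ ^ 2) = Real.log 4 + L := by
      rw [hLdef, show (4 / ρ^2 : ℝ) = 4 * (1 / ρ^2) by ring,
        Real.log_mul (by norm_num) (by positivity)]
    rw [hexp]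
    have : ∑ i : Fin r, (Real.log (2 * S i) / L + 1)
        = (∑ i, Real.log (2 * S i)) / L + r := by
      rw [Finset.sum_add_distrib, ← Finset.sum_div, Finset.sum_const, Finset.card_univ,
        Fintype.card_fin, nsmul_eq_mul, mul_one]
    rw [this]
    have h1 : (∑ i, Real.log (2 * S i)) / L ≤ (K : ℝ) * Real.log 4 / L :=
      (div_le_div_iff_of_pos_right hL).mpr hlogsum
    have hKr : (r : ℝ) ≤ K := by exact_mod_cast hrK
    have : (K:ℝ) * ((Real.log 4 + L) / L) = (K:ℝ) * Real.log 4 / L + K := by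
      field_simp
    rw [this]
    linarith
  exact lt_of_lt_of_le hmain hrhs
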